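/- Let d be a positive integer, B = (d² + 3d)/2, and let φ : S^{d−1} → ℝ^B map x = (x₁,…,x_d) to (x₁²,…,x_d², x₁x₂,…,x_{d−1}x_d, x₁,…,x_d) (all squares, all products of distinct coordinates, and all coordinates). Then the affine span of the image φ(S^{d−1}) is exactly the hyperplane {ξ ∈ ℝ^B : ξ₁ + ⋯ + ξ_d = 1}, where ξ₁,…,ξ_d are the coordinates corresponding to the squares x₁²,…,x_d². -/

import Mathlib

/-- Index type for the coordinates of `ℝ^B`, `B = (d² + 3d)/2`: one coordinate
for each square `xᵢ²`, one for each product `xᵢxⱼ` (`i < j`), and one for each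
linear term `xᵢ`. -/
abbrev QIdx (d : ℕ) : Type :=
  Fin d ⊕ ({p : Fin d × Fin d // p.1 < p.2} ⊕ Fin d)

/-- The map `φ : ℝ^d → ℝ^B` sending `x` to
`(x₁², …, x_d², x₁x₂, …, x_{d-1}x_d, x₁, …, x_d)`. -/
def phi {d : ℕ} (x : Fin d → ℝ) : QIdx d → ℝ :=
  Sum.elim (fun i => x i ^ 2)
    (Sum.elim (fun p => x p.1.1 * x p.1.2) (fun i => x i))

namespace AffSpanPhi

variable {d : ℕ}

def E (q : QIdx d) : QIdx d → ℝ := Pi.single q 1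

def e (i : Fin d) : Fin d → ℝ := Pi.single i 1

lemma e_apply (i k : Fin d) : e i k = if k = i then 1 else 0 := Pi.single_apply ..

def sph (d : ℕ) : Set (Fin d → ℝ) := {x : Fin d → ℝ | ∑ i, x i ^ 2 = 1}

noncomputable def V (d : ℕ) : Submodule ℝ (QIdx d → ℝ) := vectorSpan ℝ (phi '' sph d)

lemma single_mem_sph (i : Fin d) : e i ∈ sph d := by
  simp [sph, e_apply, apply_ite (· ^ (2:ℕ))]

lemma neg_single_mem_sph (i : Fin d) : -e i ∈ sph d := by
  simp [sph, e_apply, apply_ite (fun t : ℝ => (-t) ^ (2:ℕ))]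

lemma mix_mem_sph {i j : Fin d} (h : i ≠ j) :
    (3/5 : ℝ) • e i + (4/5 : ℝ) • e j ∈ sph d := by
  simp only [sph, Set.mem_setOf_eq, Pi.add_apply, Pi.smul_apply, smul_eq_mul, e_apply]
  rw [Finset.sum_congr rfl (fun k _ => ?_ :
    ∀ k ∈ Finset.univ, ((3/5 : ℝ) * (if k = i then 1 else 0) + 4/5 * (if k = j then 1 else 0)) ^ 2
      = (9/25) * (if k = i then 1 else 0) + (16/25) * (if k = j then 1 else 0))]
  · rw [Finset.sum_add_distrib, ← Finset.mul_sum, ← Finset.mul_sum]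
    norm_num [Finset.sum_ite_eq']
  · split_ifs with h1 h2 <;> try norm_num
    exact h (h1 ▸ h2 ▸ rfl)

lemma phi_mem (x : Fin d → ℝ) (hx : x ∈ sph d) : phi x ∈ phi '' sph d := ⟨x, hx, rfl⟩

lemma lin_mem (i : Fin d) : E (Sum.inr (Sum.inr i)) ∈ V d := by
  have key : phi (e i) - phi (-e i) = (2:ℝ) • E (Sum.inr (Sum.inr i)) := by
    funext q
    rcases q with i' | (p | i') <;>
      simp [phi, E, Pi.single_apply, e_apply, neg_mul_neg] <;> split_ifs <;> norm_num
  have h2 : E (Sum.inr (Sum.inr i)) = (2:ℝ)⁻¹ • (phi (e i) - phi (-e i)) := by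
    rw [key, smul_smul]; norm_num
  rw [h2]
  exact Submodule.smul_mem _ _
    (vsub_mem_vectorSpan ℝ (phi_mem _ (single_mem_sph i)) (phi_mem _ (neg_single_mem_sph i)))

lemma sq_diff_mem (i j : Fin d) : E (Sum.inl i) - E (Sum.inl j) ∈ V d := by
  have key : E (Sum.inl i) - E (Sum.inl j)
      = (phi (e i) - phi (e j)) - E (Sum.inr (Sum.inr i)) + E (Sum.inr (Sum.inr j)) := by
    funext q
    rcases q with i' | (p | i')
    · simp [phi, E, Pi.single_apply, e_apply, apply_ite (· ^ (2:ℕ))]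
    · simp only [phi, E, Pi.single_apply, e_apply, Sum.elim_inl, Sum.elim_inr, Pi.sub_apply,
        Pi.add_apply]
      split_ifs <;> (try norm_num) <;> (have hp := p.prop; simp_all)
    · simp [phi, E, Pi.single_apply, e_apply]
  rw [key]
  exact Submodule.add_mem _ (Submodule.sub_mem _
    (vsub_mem_vectorSpan ℝ (phi_mem _ (single_mem_sph i)) (phi_mem _ (single_mem_sph j)))
    (lin_mem i)) (lin_mem j)

lemma prod_mem (p : {p : Fin d × Fin d // p.1 < p.2}) : E (Sum.inr (Sum.inl p)) ∈ V d := by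
  obtain ⟨⟨i, j⟩, hij⟩ := p
  have hne : i ≠ j := Fin.ne_of_lt hij
  have key : (E (Sum.inr (Sum.inl ⟨(i,j),hij⟩)) : QIdx d → ℝ)
      = (25/12:ℝ) • (phi ((3/5:ℝ) • e i + (4/5:ℝ) • e j) - phi (e i))
        + (4/3:ℝ) • (E (Sum.inl i) - E (Sum.inl j))
        + (5/6:ℝ) • E (Sum.inr (Sum.inr i)) + (-(5/3):ℝ) • E (Sum.inr (Sum.inr j)) := by
    funext q
    rcases q with i' | (q | i')
    · simp only [phi, E, Pi.single_apply, e_apply, Sum.elim_inl, Sum.elim_inr, Pi.sub_apply,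
        Pi.add_apply, Pi.smul_apply, smul_eq_mul]
      split_ifs <;> simp_all <;> ring_nf
    · obtain ⟨⟨a,b⟩,hab⟩ := q
      simp only [phi, E, Pi.single_apply, e_apply, Sum.elim_inl, Sum.elim_inr, Pi.sub_apply,
        Pi.add_apply, Pi.smul_apply, smul_eq_mul, Sum.inr.injEq, Sum.inl.injEq,
        Subtype.mk.injEq, Prod.mk.injEq]
      split_ifs <;> (try simp_all) <;> (try ring_nf) <;> (try norm_num) <;>
        (try exact absurd hij (asymm hab))
    · simp only [phi, E, Pi.single_apply, e_apply, Sum.elim_inl, Sum.elim_inr, Pi.sub_apply,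
        Pi.add_apply, Pi.smul_apply, smul_eq_mul]
      split_ifs <;> simp_all <;> ring_nf
  rw [key]
  refine Submodule.add_mem _ (Submodule.add_mem _ (Submodule.add_mem _
    (Submodule.smul_mem _ _ ?_) (Submodule.smul_mem _ _ (sq_diff_mem i j)))
    (Submodule.smul_mem _ _ (lin_mem i))) (Submodule.smul_mem _ _ (lin_mem j))
  exact vsub_mem_vectorSpan ℝ (phi_mem _ (mix_mem_sph hne)) (phi_mem _ (single_mem_sph i))

lemma mem_V_of_sum_zero (v : QIdx d → ℝ) (z : Fin d) (h0 : ∑ i, v (Sum.inl i) = 0) :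
    v ∈ V d := by
  have key : v = (∑ i : Fin d, v (Sum.inl i) • (E (Sum.inl i) - E (Sum.inl z)))
      + ∑ k : ({p : Fin d × Fin d // p.1 < p.2} ⊕ Fin d), v (Sum.inr k) • E (Sum.inr k) := by
    funext q
    rcases q with i' | k'
    · simp only [Pi.add_apply, Finset.sum_apply, Pi.smul_apply, Pi.sub_apply, E,
        Pi.single_apply, smul_eq_mul, Sum.inl.injEq, mul_sub, reduceCtorEq, if_false,
        mul_zero, Finset.sum_const_zero, add_zero]
      rw [Finset.sum_sub_distrib, ← Finset.sum_mul, h0, zero_mul, sub_zero]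
      simp [mul_ite, Finset.sum_ite_eq]
    · rcases k' with p | i <;>
        simp [E, Pi.single_apply, Finset.sum_apply, mul_ite, Finset.sum_ite_eq]
  rw [key]
  refine Submodule.add_mem _
    (Submodule.sum_mem _ fun i _ => Submodule.smul_mem _ _ (sq_diff_mem i z))
    (Submodule.sum_mem _ fun k _ => Submodule.smul_mem _ _ ?_)
  rcases k with p | i
  · exact prod_mem p
  · exact lin_mem i

noncomputable def Q (d : ℕ) : AffineSubspace ℝ (QIdx d → ℝ) where
  carrier := {ξ | ∑ i, ξ (Sum.inl i) = 1}
  smul_vsub_vadd_mem' := by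
    intro c p1 p2 p3 h1 h2 h3
    simp only [Set.mem_setOf_eq, vsub_eq_sub, vadd_eq_add, Pi.add_apply, Pi.smul_apply,
      Pi.sub_apply, smul_eq_mul] at *
    simp [Finset.sum_add_distrib, mul_sub, Finset.sum_sub_distrib, ← Finset.mul_sum,
      h1, h2, h3]

end AffSpanPhi

open AffSpanPhi

/-- The affine span of the image `φ(S^{d-1})` of the unit sphere is exactly the
hyperplane `{ξ : ξ₁ + ⋯ + ξ_d = 1}` (sum over the coordinates corresponding to
the squares).  The index type `QIdx d` has cardinality `B = (d² + 3d)/2`. -/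
theorem affineSpan_phi_sphere (d : ℕ) (hd : 0 < d) :
    Fintype.card (QIdx d) = (d ^ 2 + 3 * d) / 2 ∧
    (affineSpan ℝ (phi '' {x : Fin d → ℝ | ∑ i, x i ^ 2 = 1}) : Set (QIdx d → ℝ)) =
      {ξ : QIdx d → ℝ | ∑ i, ξ (Sum.inl i) = 1} := by
  constructor
  · have e : {p : Fin d × Fin d // p.1 < p.2} ≃ Σ j : Fin d, Fin j.1 :=
      { toFun := fun p => ⟨p.1.2, ⟨p.1.1.1, p.2⟩⟩
        invFun := fun x => ⟨(⟨x.2.1, lt_trans x.2.2 x.1.2⟩, x.1), x.2.2⟩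
        left_inv := fun p => rfl
        right_inv := fun x => rfl }
    have hc : Fintype.card {p : Fin d × Fin d // p.1 < p.2} = d * (d-1) / 2 := by
      rw [Fintype.card_congr e, Fintype.card_sigma]
      simp only [Fintype.card_fin]
      rw [Fin.sum_univ_eq_sum_range (fun i => i)]
      have := Finset.sum_range_id_mul_two d
      omega
    have hmul : d * (d - 1) = d * d - d := by rw [Nat.mul_sub, Nat.mul_one]
    have hs := Finset.sum_range_id_mul_two d
    rw [hmul] at hs
    obtain ⟨t, ht⟩ : ∃ t, t * 2 = d * d - d := ⟨_, hs⟩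
    simp only [Fintype.card_sum, Fintype.card_fin, hc, pow_two, hmul]
    have hdd : d ≤ d * d := Nat.le_mul_of_pos_left d hd
    omega
  · have hsph : {x : Fin d → ℝ | ∑ i, x i ^ 2 = 1} = sph d := rfl
    rw [hsph]
    apply Set.Subset.antisymm
    · have hle : affineSpan ℝ (phi '' sph d) ≤ Q d := by
        rw [affineSpan_le]
        rintro _ ⟨x, hx, rfl⟩
        show ∑ i, phi x (Sum.inl i) = 1
        simpa [phi, sph] using hx
      exact fun ξ hξ => hle hξ
    · intro ξ hξ
      set z : Fin d := ⟨0, hd⟩ with hz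
      have hp0 : phi (e z) ∈ phi '' sph d := phi_mem _ (single_mem_sph z)
      have hmem : phi (e z) ∈ affineSpan ℝ (phi '' sph d) := mem_affineSpan ℝ hp0
      have hsum : ∑ i, phi (e z) (Sum.inl i) = 1 := by
        simpa [phi, sph] using single_mem_sph z
      have hv : ξ - phi (e z) ∈ V d := by
        apply mem_V_of_sum_zero _ z
        simp only [Pi.sub_apply, Finset.sum_sub_distrib]
        rw [hsum]
        have : ∑ i, ξ (Sum.inl i) = 1 := hξ
        rw [this]; ring
      have : ξ = (ξ - phi (e z)) +ᵥ phi (e z) := by simp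
      rw [this]
      exact AffineSubspace.vadd_mem_of_mem_direction
        (by rwa [direction_affineSpan]) hmem
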